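/- Let (Ω, 𝓕, P) be a probability space with a filtration (𝓕_t)_{t=0}^T, and let (Ψ_t)_{t=1}^T be square-integrable real random variables with Ψ_t 𝓕_t-measurable, E[Ψ_t | 𝓕_{t−1}] = 0 almost surely, and exp(λΨ_t) integrable, where λ < 0 is a fixed real number. Write v_t = E[Ψ_t² | 𝓕_{t−1}]. Suppose for constants ε ≥ 0 and δ ≥ 0 that, almost surely, E[exp(λΨ_t) | 𝓕_{t−1}] ≤ exp( (λ²/2) v_t + δ ) for every t, and Σ_{t=1}^T v_t ≤ T(1 + ε) almost surely. Then P( Σ_{t=1}^T Ψ_t ≤ Tλ ) ≤ exp( −Tλ²/2 + Tλ²ε/2 + Tδ ). -/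

import Mathlib

open MeasureTheory ProbabilityTheory Filter Real

/-- Chernoff-type concentration inequality for martingale difference sequences:
if `E[Ψ_t | 𝓕_{t−1}] = 0`, `E[exp(λΨ_t) | 𝓕_{t−1}] ≤ exp((λ²/2) v_t + δ)` a.s.
with `v_t = E[Ψ_t² | 𝓕_{t−1}]`, and `Σ_{t=1}^T v_t ≤ T(1+ε)` a.s., then for `λ < 0`,
`P(Σ_{t=1}^T Ψ_t ≤ Tλ) ≤ exp(−Tλ²/2 + Tλ²ε/2 + Tδ)`. -/
theorem stmt9 {Ω : Type*} [m0 : MeasurableSpace Ω] (μ : Measure Ω) [IsProbabilityMeasure μ]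
    (ℱ : Filtration ℕ m0) (T : ℕ)
    (Ψ : ℕ → Ω → ℝ) (lam : ℝ) (hlam : lam < 0)
    (hΨ_meas : ∀ t ∈ Finset.Icc 1 T, Measurable[ℱ t] (Ψ t))
    (hΨ_sq : ∀ t ∈ Finset.Icc 1 T, MemLp (Ψ t) 2 μ)
    (hΨ_mds : ∀ t ∈ Finset.Icc 1 T, μ[Ψ t | ℱ (t - 1)] =ᵐ[μ] fun _ => (0 : ℝ))
    (hΨ_exp_int : ∀ t ∈ Finset.Icc 1 T, Integrable (fun ω => Real.exp (lam * Ψ t ω)) μ)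
    (v : ℕ → Ω → ℝ) (hv : ∀ t ∈ Finset.Icc 1 T, v t =ᵐ[μ] μ[fun ω => (Ψ t ω) ^ 2 | ℱ (t - 1)])
    (ε δ : ℝ) (hε : 0 ≤ ε) (hδ : 0 ≤ δ)
    (hmgf : ∀ t ∈ Finset.Icc 1 T,
      μ[fun ω => Real.exp (lam * Ψ t ω) | ℱ (t - 1)]
        ≤ᵐ[μ] fun ω => Real.exp (lam ^ 2 / 2 * v t ω + δ))
    (hv_sum : ∀ᵐ ω ∂μ, ∑ t ∈ Finset.Icc 1 T, v t ω ≤ T * (1 + ε)) :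
    μ {ω | ∑ t ∈ Finset.Icc 1 T, Ψ t ω ≤ T * lam}
      ≤ ENNReal.ofReal
        (Real.exp (-(T : ℝ) * lam ^ 2 / 2 + T * lam ^ 2 * ε / 2 + T * δ)) := by
  classical
  -- the genuinely measurable version of the conditional second moments
  set v' : ℕ → Ω → ℝ := fun t => μ[fun ω => (Ψ t ω) ^ 2 | ℱ (t - 1)] with hv'def
  have hv' : ∀ t ∈ Finset.Icc 1 T, v t =ᵐ[μ] v' t := hv
  have hv'sm : ∀ t, StronglyMeasurable[ℱ (t - 1)] (v' t) := fun t => stronglyMeasurable_condExp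
  have hv'meas : ∀ t, Measurable (v' t) := fun t =>
    ((hv'sm t).mono (ℱ.le (t - 1))).measurable
  have hΨmeas0 : ∀ t ∈ Finset.Icc 1 T, Measurable (Ψ t) := fun t ht =>
    (hΨ_meas t ht).mono (ℱ.le t) le_rfl
  -- the exponential supermartingale
  set X : ℕ → Ω → ℝ := fun n ω =>
    Real.exp (lam * ∑ t ∈ Finset.Icc 1 n, Ψ t ω
      - lam ^ 2 / 2 * ∑ t ∈ Finset.Icc 1 n, v' t ω - n * δ) with hX
  have hX_nonneg : ∀ n ω, 0 ≤ X n ω := fun n ω => (Real.exp_pos _).le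
  have hXmeas : ∀ n, n ≤ T → Measurable (X n) := by
    intro n hn
    apply Measurable.exp
    apply Measurable.sub
    apply Measurable.sub
    · exact (Finset.measurable_sum _ fun t ht =>
        hΨmeas0 t (Finset.mem_Icc.mpr ⟨(Finset.mem_Icc.mp ht).1,
          le_trans (Finset.mem_Icc.mp ht).2 hn⟩)).const_mul lam
    · exact (Finset.measurable_sum _ fun t _ => hv'meas t).const_mul _
    · exact measurable_const
  -- key supermartingale bound
  have key : ∀ n, n ≤ T → ∫⁻ ω, ENNReal.ofReal (X n ω) ∂μ ≤ 1 := by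
    intro n
    induction n with
    | zero =>
      intro _
      have : X 0 = fun _ => (1 : ℝ) := by
        funext ω
        simp [hX, Finset.Icc_eq_empty (by omega : ¬(1 : ℕ) ≤ 0)]
      rw [this]
      simp
    | succ n ih =>
      intro hn1
      have hnT : n ≤ T := Nat.le_of_succ_le hn1
      have ih' := ih hnT
      have hmem : n + 1 ∈ Finset.Icc 1 T := Finset.mem_Icc.mpr ⟨by omega, hn1⟩
      have hmn : ℱ n ≤ m0 := ℱ.le n
      have hXn_int : Integrable (X n) μ := by
        refine ⟨((hXmeas n hnT).aestronglyMeasurable), ?_⟩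
        rw [hasFiniteIntegral_iff_norm]
        calc ∫⁻ ω, ENNReal.ofReal ‖X n ω‖ ∂μ
            = ∫⁻ ω, ENNReal.ofReal (X n ω) ∂μ := by
              congr 1; funext ω; rw [Real.norm_eq_abs, abs_of_nonneg (hX_nonneg n ω)]
          _ ≤ 1 := ih'
          _ < ⊤ := ENNReal.one_lt_top
      have hXn_integral_le : ∫ ω, X n ω ∂μ ≤ 1 := by
        rw [integral_eq_lintegral_of_nonneg_ae (Filter.Eventually.of_forall (hX_nonneg n))
          (hXmeas n hnT).aestronglyMeasurable]
        calc (∫⁻ ω, ENNReal.ofReal (X n ω) ∂μ).toReal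
            ≤ (1 : ENNReal).toReal := ENNReal.toReal_mono ENNReal.one_ne_top ih'
          _ = 1 := by simp
      set g : Ω → ℝ := fun ω => Real.exp (lam * Ψ (n + 1) ω) with hg
      set f : Ω → ℝ := fun ω => X n ω * Real.exp (-(lam ^ 2 / 2) * v' (n + 1) ω - δ) with hf
      have hf_nonneg : ∀ ω, 0 ≤ f ω := fun ω =>
        mul_nonneg (hX_nonneg n ω) (Real.exp_pos _).le
      have hg_nonneg : ∀ ω, 0 ≤ g ω := fun ω => (Real.exp_pos _).le
      have hfsm : StronglyMeasurable[ℱ n] f := by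
        have h1 : Measurable[ℱ n] (X n) := by
          apply Measurable.exp
          apply Measurable.sub
          apply Measurable.sub
          · refine (Finset.measurable_sum _ fun t ht => ?_).const_mul lam
            exact (hΨ_meas t (Finset.mem_Icc.mpr ⟨(Finset.mem_Icc.mp ht).1,
              le_trans (Finset.mem_Icc.mp ht).2 hnT⟩)).mono
              (ℱ.mono (Finset.mem_Icc.mp ht).2) le_rfl
          · refine (Finset.measurable_sum _ fun t ht => ?_).const_mul _
            exact ((hv'sm t).mono (ℱ.mono (by
              have := (Finset.mem_Icc.mp ht).2; omega))).measurable
          · exact measurable_const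
        have h2 : Measurable[ℱ n] (v' (n + 1)) := by
          have : n + 1 - 1 = n := by omega
          exact (this ▸ (hv'sm (n + 1))).measurable
        exact ((h1.mul ((((h2.const_mul _).sub measurable_const).exp)))).stronglyMeasurable
      have hg_int : Integrable g μ := hΨ_exp_int (n + 1) hmem
      have hfXid : ∀ ω, f ω * Real.exp (lam ^ 2 / 2 * v' (n + 1) ω + δ) = X n ω := by
        intro ω
        rw [hf, mul_assoc, ← Real.exp_add]
        have : -(lam ^ 2 / 2) * v' (n + 1) ω - δ + (lam ^ 2 / 2 * v' (n + 1) ω + δ) = 0 := by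
          ring
        rw [this, Real.exp_zero, mul_one]
      have hfg : ∀ ω, X (n + 1) ω = f ω * g ω := by
        intro ω
        rw [hf, hg, hX]
        simp only
        rw [Finset.sum_Icc_succ_top (by omega : 1 ≤ n + 1),
          Finset.sum_Icc_succ_top (by omega : 1 ≤ n + 1), mul_assoc, ← Real.exp_add,
          ← Real.exp_add]
        congr 1
        push_cast
        ring
      -- conditional mgf bound in terms of v'
      have hmgf' : μ[g | ℱ n] ≤ᵐ[μ] fun ω => Real.exp (lam ^ 2 / 2 * v' (n + 1) ω + δ) := by
        have h1 := hmgf (n + 1) hmem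
        have h2 := hv' (n + 1) hmem
        filter_upwards [h1, h2] with ω hω1 hω2
        calc (μ[g | ℱ n]) ω ≤ Real.exp (lam ^ 2 / 2 * v (n + 1) ω + δ) := hω1
          _ = Real.exp (lam ^ 2 / 2 * v' (n + 1) ω + δ) := by rw [hω2]
      -- truncated step bound
      have hstep : ∀ N : ℕ, ∫⁻ ω, ENNReal.ofReal (min (f ω) N * g ω) ∂μ ≤ 1 := by
        intro N
        set h : Ω → ℝ := fun ω => min (f ω) N with hh
        have hhsm : StronglyMeasurable[ℱ n] h :=
          (hfsm.measurable.min measurable_const).stronglyMeasurable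
        have hh_nonneg : ∀ ω, 0 ≤ h ω := fun ω =>
          le_min (hf_nonneg ω) (Nat.cast_nonneg N)
        have hh_le : ∀ ω, h ω ≤ N := fun ω => min_le_right _ _
        have hhg_int : Integrable (h * g) μ := by
          refine Integrable.mono (hg_int.const_mul N)
            (((hhsm.mono hmn).aestronglyMeasurable).mul hg_int.aestronglyMeasurable) ?_
          filter_upwards with ω
          simp only [Pi.mul_apply, Real.norm_eq_abs]
          rw [abs_of_nonneg (mul_nonneg (hh_nonneg ω) (hg_nonneg ω)),
            abs_of_nonneg (mul_nonneg (by positivity) (hg_nonneg ω))]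
          exact mul_le_mul_of_nonneg_right (hh_le ω) (hg_nonneg ω)
        have hpull : μ[h * g | ℱ n] =ᵐ[μ] h * μ[g | ℱ n] :=
          condExp_mul_of_stronglyMeasurable_left hhsm hhg_int hg_int
        have hmulint : Integrable (h * μ[g | ℱ n]) μ :=
          integrable_condExp.congr hpull
        have hIb : ∫ ω, (h * μ[g | ℱ n]) ω ∂μ ≤ ∫ ω, X n ω ∂μ := by
          refine integral_mono_ae hmulint hXn_int ?_
          filter_upwards [hmgf'] with ω hω
          calc (h * μ[g | ℱ n]) ω ≤ h ω * Real.exp (lam ^ 2 / 2 * v' (n + 1) ω + δ) :=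
                mul_le_mul_of_nonneg_left hω (hh_nonneg ω)
            _ ≤ f ω * Real.exp (lam ^ 2 / 2 * v' (n + 1) ω + δ) :=
                mul_le_mul_of_nonneg_right (min_le_left _ _) (Real.exp_pos _).le
            _ = X n ω := hfXid ω
        have hInt : ∫ ω, h ω * g ω ∂μ ≤ 1 := by
          calc ∫ ω, h ω * g ω ∂μ = ∫ ω, (μ[h * g | ℱ n]) ω ∂μ :=
                (integral_condExp hmn).symm
            _ = ∫ ω, (h * μ[g | ℱ n]) ω ∂μ := integral_congr_ae hpull
            _ ≤ ∫ ω, X n ω ∂μ := hIb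
            _ ≤ 1 := hXn_integral_le
        calc ∫⁻ ω, ENNReal.ofReal (min (f ω) N * g ω) ∂μ
            = ENNReal.ofReal (∫ ω, h ω * g ω ∂μ) :=
              (ofReal_integral_eq_lintegral_ofReal hhg_int
                (Filter.Eventually.of_forall fun ω =>
                  mul_nonneg (hh_nonneg ω) (hg_nonneg ω))).symm
          _ ≤ ENNReal.ofReal 1 := ENNReal.ofReal_le_ofReal hInt
          _ = 1 := ENNReal.ofReal_one
      -- monotone convergence
      have hfmeas : Measurable f := by
        exact (hXmeas n hnT).mul
          ((((hv'meas (n + 1)).const_mul _).sub measurable_const).exp)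
      have hgmeas : Measurable g := ((hΨmeas0 (n + 1) hmem).const_mul lam).exp
      have hsupeq : ∀ ω, ENNReal.ofReal (X (n + 1) ω)
          = ⨆ N : ℕ, ENNReal.ofReal (min (f ω) N * g ω) := by
        intro ω
        rw [hfg ω]
        refine le_antisymm ?_ (iSup_le fun N => ENNReal.ofReal_le_ofReal
          (mul_le_mul_of_nonneg_right (min_le_left _ _) (hg_nonneg ω)))
        refine le_iSup_of_le ⌈f ω⌉₊ ?_
        rw [min_eq_left (Nat.le_ceil _)]
      calc ∫⁻ ω, ENNReal.ofReal (X (n + 1) ω) ∂μ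
          = ∫⁻ ω, ⨆ N : ℕ, ENNReal.ofReal (min (f ω) N * g ω) ∂μ := by
            congr 1; funext ω; exact hsupeq ω
        _ = ⨆ N : ℕ, ∫⁻ ω, ENNReal.ofReal (min (f ω) N * g ω) ∂μ := by
            refine lintegral_iSup (fun N => ?_) (fun N M hNM ω => ?_)
            · exact ((hfmeas.min measurable_const).mul hgmeas).ennreal_ofReal
            · exact ENNReal.ofReal_le_ofReal (mul_le_mul_of_nonneg_right
                (min_le_min le_rfl (Nat.cast_le.mpr hNM)) (hg_nonneg ω))
        _ ≤ 1 := iSup_le hstep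
  -- from the supermartingale bound to a bound on E[exp(λ S_T)]
  have hXT := key T le_rfl
  set S : Ω → ℝ := fun ω => ∑ t ∈ Finset.Icc 1 T, Ψ t ω with hS
  have hSmeas : Measurable S := Finset.measurable_sum _ fun t ht => hΨmeas0 t ht
  set C : ℝ := lam ^ 2 / 2 * (T * (1 + ε)) + T * δ with hC
  have hv_all : ∀ᵐ ω ∂μ, ∀ t ∈ Finset.Icc 1 T, v t ω = v' t ω := by
    have h := (MeasureTheory.ae_ball_iff (Finset.Icc 1 T).countable_toSet).2
      (fun t ht => hv' t (Finset.mem_coe.mp ht))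
    filter_upwards [h] with ω hω t ht
    exact hω t (Finset.mem_coe.mpr ht)
  have hS_bound : ∀ᵐ ω ∂μ, Real.exp (lam * S ω) ≤ X T ω * Real.exp C := by
    filter_upwards [hv_all, hv_sum] with ω hall hsum
    have hsum' : ∑ t ∈ Finset.Icc 1 T, v' t ω ≤ T * (1 + ε) := by
      rw [← Finset.sum_congr rfl hall]
      exact hsum
    have : Real.exp (lam * S ω)
        = X T ω * Real.exp (lam ^ 2 / 2 * ∑ t ∈ Finset.Icc 1 T, v' t ω + T * δ) := by
      show Real.exp (lam * S ω)
        = Real.exp (lam * ∑ t ∈ Finset.Icc 1 T, Ψ t ω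
            - lam ^ 2 / 2 * ∑ t ∈ Finset.Icc 1 T, v' t ω - (T : ℝ) * δ)
          * Real.exp (lam ^ 2 / 2 * ∑ t ∈ Finset.Icc 1 T, v' t ω + T * δ)
      rw [← Real.exp_add, hS]
      congr 1
      ring
    rw [this]
    refine mul_le_mul_of_nonneg_left (Real.exp_le_exp.2 ?_) (hX_nonneg T ω)
    rw [hC]
    have h2 : (0 : ℝ) ≤ lam ^ 2 / 2 := by positivity
    nlinarith [hsum', h2]
  have hlin : ∫⁻ ω, ENNReal.ofReal (Real.exp (lam * S ω)) ∂μ ≤ ENNReal.ofReal (Real.exp C) := by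
    calc ∫⁻ ω, ENNReal.ofReal (Real.exp (lam * S ω)) ∂μ
        ≤ ∫⁻ ω, ENNReal.ofReal (X T ω) * ENNReal.ofReal (Real.exp C) ∂μ := by
          refine lintegral_mono_ae ?_
          filter_upwards [hS_bound] with ω hω
          rw [← ENNReal.ofReal_mul (hX_nonneg T ω)]
          exact ENNReal.ofReal_le_ofReal hω
      _ = (∫⁻ ω, ENNReal.ofReal (X T ω) ∂μ) * ENNReal.ofReal (Real.exp C) :=
          lintegral_mul_const _ ((hXmeas T le_rfl).ennreal_ofReal)
      _ ≤ 1 * ENNReal.ofReal (Real.exp C) := mul_le_mul_left hXT _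
      _ = ENNReal.ofReal (Real.exp C) := one_mul _
  -- Chernoff / Markov
  have hset : {ω | S ω ≤ T * lam}
      ⊆ {ω | ENNReal.ofReal (Real.exp (T * lam ^ 2))
          ≤ ENNReal.ofReal (Real.exp (lam * S ω))} := by
    intro ω hω
    simp only [Set.mem_setOf_eq] at hω ⊢
    refine ENNReal.ofReal_le_ofReal (Real.exp_le_exp.2 ?_)
    nlinarith [hω, hlam]
  have hden_pos : (0 : ENNReal) < ENNReal.ofReal (Real.exp (T * lam ^ 2)) :=
    ENNReal.ofReal_pos.2 (Real.exp_pos _)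
  have hmarkov := mul_meas_ge_le_lintegral₀ (μ := μ)
    ((hSmeas.const_mul lam).exp.ennreal_ofReal.aemeasurable)
    (ENNReal.ofReal (Real.exp (T * lam ^ 2)))
  calc μ {ω | S ω ≤ T * lam}
      ≤ μ {ω | ENNReal.ofReal (Real.exp (T * lam ^ 2))
          ≤ ENNReal.ofReal (Real.exp (lam * S ω))} := measure_mono hset
    _ ≤ (∫⁻ ω, ENNReal.ofReal (Real.exp (lam * S ω)) ∂μ)
          / ENNReal.ofReal (Real.exp (T * lam ^ 2)) := by
        rw [ENNReal.le_div_iff_mul_le (Or.inl hden_pos.ne') (Or.inl ENNReal.ofReal_ne_top)]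
        rw [mul_comm]
        exact hmarkov
    _ ≤ ENNReal.ofReal (Real.exp C) / ENNReal.ofReal (Real.exp (T * lam ^ 2)) :=
        ENNReal.div_le_div_right hlin _
    _ = ENNReal.ofReal (Real.exp C / Real.exp (T * lam ^ 2)) := by
        rw [ENNReal.ofReal_div_of_pos (Real.exp_pos _)]
    _ = ENNReal.ofReal (Real.exp (-(T : ℝ) * lam ^ 2 / 2 + T * lam ^ 2 * ε / 2 + T * δ)) := by
        rw [← Real.exp_sub]
        congr 1
        rw [hC]
        ring
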